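/- Let (X,d) be an (α,η)-complete rectangular b-metric space with s > 1, T : X → X triangular (α,η)-admissible, (α,η)-continuous, with x₀ satisfying α(x₀,Tx₀) ≥ 1 or η(x₀,Tx₀) ≤ 1, and suppose there exist θ ∈ Θ and k ∈ (0,1) such that θ(s²·d(Tx,Ty)) ≤ [θ(d(x,y))]^k whenever (α(x,y) ≥ 1 or η(x,y) ≤ 1) and d(Tx,Ty) > 0. Then T has a fixed point, unique whenever α(z,u) ≥ 1 or η(z,u) ≤ 1 for all fixed points z,u. -/

import Mathlib

open Filter Topology

def RectB {X : Type*} (d : X → X → ℝ) (s : ℝ) : Prop :=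
  (∀ x y, 0 ≤ d x y) ∧
  (∀ x y, d x y = 0 ↔ x = y) ∧
  (∀ x y, d x y = d y x) ∧
  (∀ x y u v, u ≠ v → u ≠ x → u ≠ y → v ≠ x → v ≠ y →
    d x y ≤ s * (d x u + d u v + d v y))

def ConvTo {X : Type*} (d : X → X → ℝ) (x : ℕ → X) (a : X) : Prop :=
  Tendsto (fun n => d (x n) a) atTop (𝓝 0)

def DCauchy {X : Type*} (d : X → X → ℝ) (x : ℕ → X) : Prop :=
  ∀ ε > 0, ∃ N, ∀ m ≥ N, ∀ n ≥ N, d (x m) (x n) < ε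

def IsTheta (θ : ℝ → ℝ) : Prop :=
  (∀ t, 0 < t → 1 < θ t) ∧
  StrictMonoOn θ (Set.Ioi 0) ∧
  ContinuousOn θ (Set.Ioi 0) ∧
  ∀ x : ℕ → ℝ, (∀ n, 0 < x n) →
    (Tendsto (fun n => θ (x n)) atTop (𝓝 1) ↔ Tendsto x atTop (𝓝 0))

def IsPhi (φ : ℝ → ℝ) : Prop :=
  (∀ t, 1 ≤ t → 1 ≤ φ t) ∧
  MonotoneOn φ (Set.Ici 1) ∧
  ContinuousOn φ (Set.Ici 1) ∧
  ∀ t, 1 < t → Tendsto (fun n => φ^[n] t) atTop (𝓝 1)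

def TriAdm {X : Type*} (T : X → X) (α η : X → X → ℝ) : Prop :=
  (∀ x y, 1 ≤ α x y → 1 ≤ α (T x) (T y)) ∧
  (∀ x y, η x y ≤ 1 → η (T x) (T y) ≤ 1) ∧
  (∀ x y z, 1 ≤ α x y → 1 ≤ α y z → 1 ≤ α x z) ∧
  (∀ x y z, η x y ≤ 1 → η y z ≤ 1 → η x z ≤ 1)

def AEComplete {X : Type*} (d α η : X → X → ℝ) : Prop :=
  ∀ x : ℕ → X, (∀ n, 1 ≤ α (x n) (x (n+1)) ∨ η (x n) (x (n+1)) ≤ 1) →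
    DCauchy d x → ∃ a, ConvTo d x a

def AEContinuous {X : Type*} (d α η : X → X → ℝ) (T : X → X) : Prop :=
  ∀ (x : ℕ → X) (a : X),
    (∀ n, 1 ≤ α (x n) (x (n+1)) ∨ η (x n) (x (n+1)) ≤ 1) →
    ConvTo d x a → ConvTo d (fun n => T (x n)) (T a)

def AERegular {X : Type*} (d α η : X → X → ℝ) : Prop :=
  ∀ (x : ℕ → X) (a : X),
    (∀ n, 1 ≤ α (x n) (x (n+1)) ∨ η (x n) (x (n+1)) ≤ 1) →
    ConvTo d x a → ∀ n, 1 ≤ α (x n) a ∨ η (x n) a ≤ 1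

def AEContr {X : Type*} (d α η : X → X → ℝ) (T : X → X) (θ φ : ℝ → ℝ)
    (s β₁ β₂ β₃ β₄ : ℝ) : Prop :=
  ∀ x y, (1 ≤ α x y ∨ η x y ≤ 1) → 0 < d (T x) (T y) →
    θ (s ^ 2 * d (T x) (T y)) ≤
      φ (θ (β₁ * d x y + β₂ * d (T x) x + β₃ * d (T y) y + β₄ * d y (T x)))

private lemma chain_aux {X : Type*} (T : X → X) (P : X → X → Prop)
    (hstep : ∀ a b, P a b → P (T a) (T b))
    (htrans : ∀ a b c, P a b → P b c → P a c)
    (x : ℕ → X) (hx : ∀ n, x (n+1) = T (x n))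
    (h0 : P (x 0) (x 1)) :
    ∀ n m, n < m → P (x n) (x m) := by
  have hsucc : ∀ n, P (x n) (x (n+1)) := by
    intro n
    induction n with
    | zero => exact h0
    | succ n ih =>
      have ih' : P (x n) (T (x n)) := by rw [← hx n]; exact ih
      have h2 := hstep _ _ ih'
      rw [hx (n+1), hx n]; exact h2
  intro n m h
  induction m with
  | zero => omega
  | succ m ih =>
    rcases Nat.lt_succ_iff_lt_or_eq.mp h with h' | h'
    · exact htrans _ _ _ (ih h') (hsucc m)
    · subst h'; exact hsucc n

theorem stmt8 {X : Type*} (d α η : X → X → ℝ) (s : ℝ) (hs : 1 < s)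
    (hd : RectB d s) (hα : ∀ x y, 0 ≤ α x y) (hη : ∀ x y, 0 ≤ η x y)
    (hcomp : AEComplete d α η) (T : X → X)
    (θ : ℝ → ℝ) (hθ : IsTheta θ) (k : ℝ) (hk0 : 0 < k) (hk1 : k < 1)
    (hadm : TriAdm T α η) (hTc : AEContinuous d α η T)
    (hx₀ : ∃ x₀, 1 ≤ α x₀ (T x₀) ∨ η x₀ (T x₀) ≤ 1)
    (hcontr : ∀ x y, (1 ≤ α x y ∨ η x y ≤ 1) → 0 < d (T x) (T y) →
      θ (s ^ 2 * d (T x) (T y)) ≤ (θ (d x y)) ^ k) :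
    (∃ z, T z = z) ∧
    ((∀ z u, T z = z → T u = u → 1 ≤ α z u ∨ η z u ≤ 1) → ∃! z, T z = z) := by
  obtain ⟨hd0, hdeq, hdsymm, hdrect⟩ := hd
  have hs0 : (0:ℝ) < s := by linarith
  have hs2 : (1:ℝ) < s ^ 2 := by nlinarith
  have hs20 : (0:ℝ) < s ^ 2 := by nlinarith
  -- the key contraction consequence
  have contract_step : ∀ u v, (1 ≤ α u v ∨ η u v ≤ 1) →
      s ^ 2 * d (T u) (T v) ≤ d u v := by
    intro u v hcond
    rcases eq_or_lt_of_le (hd0 (T u) (T v)) with h0 | hpos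
    · rw [← h0, mul_zero]; exact hd0 u v
    · have hduv : 0 < d u v := by
        rcases eq_or_lt_of_le (hd0 u v) with h1 | h1
        · exfalso
          have : u = v := (hdeq u v).mp h1.symm
          rw [this] at hpos
          have : d (T v) (T v) = 0 := (hdeq _ _).mpr rfl
          linarith
        · exact h1
      have hc := hcontr u v hcond hpos
      have hb : 1 < θ (d u v) := hθ.1 _ hduv
      have h1 : θ (d u v) ^ k < θ (d u v) := by
        calc θ (d u v) ^ k < θ (d u v) ^ (1:ℝ) :=
              (Real.rpow_lt_rpow_left_iff hb).mpr hk1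
          _ = θ (d u v) := Real.rpow_one _
      have hlt : θ (s ^ 2 * d (T u) (T v)) < θ (d u v) := lt_of_le_of_lt hc h1
      have hmem1 : s ^ 2 * d (T u) (T v) ∈ Set.Ioi (0:ℝ) := mul_pos hs20 hpos
      have hmem2 : d u v ∈ Set.Ioi (0:ℝ) := hduv
      exact le_of_lt ((hθ.2.1.lt_iff_lt hmem1 hmem2).mp hlt)
  have hex : ∃ z, T z = z := by
    obtain ⟨x₀, hx₀'⟩ := hx₀
    obtain ⟨x, hx0, hx⟩ : ∃ x : ℕ → X, x 0 = x₀ ∧ ∀ n, x (n+1) = T (x n) :=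
      ⟨fun n => T^[n] x₀, rfl, fun n => Function.iterate_succ_apply' T n x₀⟩
    have hpair : ∀ n m, n < m → (1 ≤ α (x n) (x m) ∨ η (x n) (x m) ≤ 1) := by
      rcases hx₀' with h | h
      · intro n m hnm
        refine Or.inl (chain_aux T (fun u v => 1 ≤ α u v) hadm.1 hadm.2.2.1 x hx ?_ n m hnm)
        rw [hx 0, hx0]; exact h
      · intro n m hnm
        refine Or.inr (chain_aux T (fun u v => η u v ≤ 1) hadm.2.1 hadm.2.2.2 x hx ?_ n m hnm)
        rw [hx 0, hx0]; exact h
    have hstepd : ∀ n, s ^ 2 * d (x (n+1)) (x (n+2)) ≤ d (x n) (x (n+1)) := by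
      intro n
      have := contract_step (x n) (x (n+1)) (hpair n (n+1) (by omega))
      rwa [← hx n, ← hx (n+1)] at this
    have hstepe : ∀ n, s ^ 2 * d (x (n+1)) (x (n+3)) ≤ d (x n) (x (n+2)) := by
      intro n
      have := contract_step (x n) (x (n+2)) (hpair n (n+2) (by omega))
      rw [← hx n] at this
      have e : n + 3 = (n + 2) + 1 := by omega
      rwa [e, hx (n+2)]
    set q : ℝ := (s ^ 2)⁻¹ with hqdef
    have hq0 : 0 < q := inv_pos.mpr hs20
    have hq1 : q < 1 := by
      rw [hqdef]; rw [inv_lt_one_iff₀]; right; exact hs2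
    have hqs : q * s ^ 2 = 1 := inv_mul_cancel₀ (ne_of_gt hs20)
    set D : ℝ := d (x 0) (x 1) + d (x 0) (x 2) with hDdef
    have hD0 : 0 ≤ D := add_nonneg (hd0 _ _) (hd0 _ _)
    have hdle : ∀ n, d (x n) (x (n+1)) ≤ D * q ^ n := by
      intro n
      induction n with
      | zero =>
        rw [pow_zero, mul_one, hDdef]
        nlinarith [hd0 (x 0) (x 2)]
      | succ n ih =>
        calc d (x (n+1)) (x (n+2))
            = q * (s ^ 2 * d (x (n+1)) (x (n+2))) := by
              rw [← mul_assoc, hqs, one_mul]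
          _ ≤ q * d (x n) (x (n+1)) :=
              mul_le_mul_of_nonneg_left (hstepd n) hq0.le
          _ ≤ q * (D * q ^ n) := mul_le_mul_of_nonneg_left ih hq0.le
          _ = D * q ^ (n+1) := by ring
    have hele : ∀ n, d (x n) (x (n+2)) ≤ D * q ^ n := by
      intro n
      induction n with
      | zero =>
        rw [pow_zero, mul_one, hDdef]
        have e2 : (0:ℕ) + 2 = 2 := rfl
        nlinarith [hd0 (x 0) (x 1)]
      | succ n ih =>
        calc d (x (n+1)) (x (n+3))
            = q * (s ^ 2 * d (x (n+1)) (x (n+3))) := by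
              rw [← mul_assoc, hqs, one_mul]
          _ ≤ q * d (x n) (x (n+2)) :=
              mul_le_mul_of_nonneg_left (hstepe n) hq0.le
          _ ≤ q * (D * q ^ n) := mul_le_mul_of_nonneg_left ih hq0.le
          _ = D * q ^ (n+1) := by ring
    by_cases hfix : ∃ n, d (x n) (x (n+1)) = 0
    · obtain ⟨n, hn⟩ := hfix
      have heq : x n = x (n+1) := (hdeq _ _).mp hn
      exact ⟨x n, (hx n).symm.trans heq.symm⟩
    · push_neg at hfix
      have hdpos : ∀ n, 0 < d (x n) (x (n+1)) := fun n =>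
        lt_of_le_of_ne (hd0 _ _) (Ne.symm (hfix n))
      have hanti : StrictAnti (fun n => d (x n) (x (n+1))) := by
        apply strictAnti_nat_of_succ_lt
        intro n
        have h1 := hstepd n
        have h2 := hdpos (n+1)
        show d (x (n+1)) (x (n+1+1)) < d (x n) (x (n+1))
        have e : n+1+1 = n+2 := rfl
        rw [e]
        nlinarith
      have hinj : ∀ n m, n < m → x n ≠ x m := by
        intro n m hnm he
        have h1 : x (n+1) = x (m+1) := by rw [hx, hx, he]
        have hlt : d (x m) (x (m+1)) < d (x n) (x (n+1)) := hanti hnm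
        rw [← he, ← h1] at hlt
        exact lt_irrefl _ hlt
      have hcq : 0 < 1 - s * q ^ 2 := by
        have : s * q ^ 2 < 1 := by
          rw [hqdef]
          rw [show ((s^2)⁻¹)^2 = (s^4)⁻¹ by field_simp]
          rw [mul_inv_lt_iff₀ (by nlinarith), one_mul]
          nlinarith
        linarith
      set M : ℝ := s * D * (1 + q) / (1 - s * q ^ 2) with hMdef
      have hM0 : 0 ≤ M := by
        apply div_nonneg _ hcq.le
        have : 0 ≤ 1 + q := by linarith
        positivity
      have hMkey : s * D * (1 + q) + s * M * q ^ 2 = M := by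
        rw [hMdef]; field_simp; ring
      have hDM : D ≤ M := by
        nlinarith [mul_nonneg hs0.le hD0, mul_nonneg (mul_nonneg hs0.le hD0) hq0.le,
          mul_nonneg hM0 (mul_nonneg hs0.le (sq_nonneg q))]
      have claim : ∀ p n, d (x n) (x (n + p)) ≤ M * q ^ n := by
        intro p
        induction p using Nat.strong_induction_on with
        | _ p ih =>
          intro n
          match p with
          | 0 =>
            have : d (x n) (x (n + 0)) = 0 := (hdeq _ _).mpr (by norm_num)
            rw [this]; positivity
          | 1 =>
            calc d (x n) (x (n + 1)) ≤ D * q ^ n := hdle n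
              _ ≤ M * q ^ n := by
                  apply mul_le_mul_of_nonneg_right hDM (by positivity)
          | 2 =>
            calc d (x n) (x (n + 2)) ≤ D * q ^ n := hele n
              _ ≤ M * q ^ n := by
                  apply mul_le_mul_of_nonneg_right hDM (by positivity)
          | (p + 3) =>
            have ihp := ih (p + 1) (by omega) (n + 2)
            have e : (n + 2) + (p + 1) = n + (p + 3) := by omega
            rw [e] at ihp
            have hrect := hdrect (x n) (x (n + (p + 3))) (x (n+1)) (x (n+2))
              (hinj (n+1) (n+2) (by omega))
              (Ne.symm (hinj n (n+1) (by omega)))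
              (hinj (n+1) (n + (p + 3)) (by omega))
              (Ne.symm (hinj n (n+2) (by omega)))
              (hinj (n+2) (n + (p + 3)) (by omega))
            have hmain : s * (D * q ^ n + D * q ^ (n+1) + M * q ^ (n+2)) = M * q ^ n := by
              have h1 : q ^ (n+1) = q ^ n * q := pow_succ q n
              have h2 : q ^ (n+2) = q ^ n * q ^ 2 := by ring
              rw [h1, h2]
              linear_combination (q ^ n) * hMkey
            calc d (x n) (x (n + (p + 3)))
                ≤ s * (d (x n) (x (n+1)) + d (x (n+1)) (x (n+2)) + d (x (n+2)) (x (n + (p+3)))) := hrect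
              _ ≤ s * (D * q ^ n + D * q ^ (n+1) + M * q ^ (n+2)) := by
                  apply mul_le_mul_of_nonneg_left _ hs0.le
                  exact add_le_add (add_le_add (hdle n) (hdle (n+1))) ihp
              _ = M * q ^ n := hmain
      have hbound : ∀ m n, m ≤ n → d (x m) (x n) ≤ M * q ^ m := by
        intro m n h
        have := claim (n - m) m
        rwa [Nat.add_sub_cancel' h] at this
      have hcau : DCauchy d x := by
        intro ε hε
        have htend : Tendsto (fun n => M * q ^ n) atTop (𝓝 0) := by
          simpa using (tendsto_pow_atTop_nhds_zero_of_lt_one hq0.le hq1).const_mul M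
        obtain ⟨N, hN⟩ := (htend.eventually (gt_mem_nhds hε)).exists_forall_of_atTop
        refine ⟨N, fun m hm n hn => ?_⟩
        rcases le_total m n with h | h
        · exact lt_of_le_of_lt (hbound m n h) (hN m hm)
        · rw [hdsymm]
          exact lt_of_le_of_lt (hbound n m h) (hN n hn)
      obtain ⟨a, ha⟩ := hcomp x (fun n => hpair n (n+1) (by omega)) hcau
      have ha' : Tendsto (fun n => d (x n) a) atTop (𝓝 0) := ha
      have hTa : ConvTo d (fun n => T (x n)) (T a) :=
        hTc x a (fun n => hpair n (n+1) (by omega)) ha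
      have hTa' : Tendsto (fun n => d (x (n+1)) (T a)) atTop (𝓝 0) := by
        have hTa2 : Tendsto (fun n => d (T (x n)) (T a)) atTop (𝓝 0) := hTa
        exact hTa2.congr (fun n => by rw [← hx n])
      have hne : ∀ c : X, ∃ N, ∀ n, N ≤ n → x n ≠ c := by
        intro c
        by_cases h : ∃ n, x n = c
        · obtain ⟨n₀, h₀⟩ := h
          refine ⟨n₀ + 1, fun n hn he => ?_⟩
          exact hinj n₀ n (by omega) (h₀.trans he.symm)
        · exact ⟨0, fun n _ he => h ⟨n, he⟩⟩
      obtain ⟨N₁, hN₁⟩ := hne a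
      obtain ⟨N₂, hN₂⟩ := hne (T a)
      have hdn0 : Tendsto (fun n => d (x n) (x (n+1))) atTop (𝓝 0) := by
        apply squeeze_zero (fun n => hd0 _ _) hdle
        simpa using (tendsto_pow_atTop_nhds_zero_of_lt_one hq0.le hq1).const_mul D
      have hfinal : d a (T a) ≤ 0 := by
        have htend2 : Tendsto
            (fun n => s * (d (x n) a + d (x n) (x (n+1)) + d (x (n+1)) (T a)))
            atTop (𝓝 0) := by
          have := ((ha'.add hdn0).add hTa').const_mul s
          simpa using this
        refine ge_of_tendsto htend2 ?_
        filter_upwards [eventually_ge_atTop (max N₁ N₂ + 1)] with n hn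
        have hrect := hdrect a (T a) (x n) (x (n+1))
          (hinj n (n+1) (by omega))
          (hN₁ n (by omega)) (hN₂ n (by omega))
          (hN₁ (n+1) (by omega)) (hN₂ (n+1) (by omega))
        calc d a (T a)
            ≤ s * (d a (x n) + d (x n) (x (n+1)) + d (x (n+1)) (T a)) := hrect
          _ = s * (d (x n) a + d (x n) (x (n+1)) + d (x (n+1)) (T a)) := by
              rw [hdsymm a (x n)]
      have : d a (T a) = 0 := le_antisymm hfinal (hd0 _ _)
      exact ⟨a, ((hdeq _ _).mp this).symm⟩
  refine ⟨hex, fun hall => ?_⟩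
  obtain ⟨z, hz⟩ := hex
  refine ⟨z, hz, fun u hu => ?_⟩
  have hc := contract_step u z (hall u z hu hz)
  rw [hu, hz] at hc
  have h0 : d u z = 0 := by nlinarith [hd0 u z]
  exact (hdeq u z).mp h0
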